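/- Let (A;E) be an exact category and let m1: B → C1 and m2: B → C2 be inflations with common domain B, occurring in conflations B → C1 → A1 and B → C2 → A2. Then the pushout m1 ⨿_B m2 : B → C1 ⨿_B C2 is the inflation occurring in the pushout of the direct-sum conflation B ⊕ B → C1 ⊕ C2 → A1 ⊕ A2 along the sum morphism s = (1_B, 1_B): B ⊕ B → B; that is, there is a morphism of conflations from B ⊕ B → C1 ⊕ C2 → A1 ⊕ A2 to B → C1 ⨿_B C2 → A1 ⊕ A2 whose left component is s, whose middle component is the canonical map (p1, p2), and whose right component is the identity of A1 ⊕ A2, and whose left-hand square is a pushout square. -/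

import Mathlib

open CategoryTheory CategoryTheory.Limits

universe w v u

namespace IdealApprox

/-- The data of an exact structure: a class of composable pairs
(the "conflations" `B ⟶ C ⟶ X`). -/
structure ExactStructureData (A : Type u) [Category.{v} A] [Preadditive A] :
    Type (max u v) where
  conf : ∀ ⦃B C X : A⦄, (B ⟶ C) → (C ⟶ X) → Prop

/-- An ideal of an additive category: an additive subbifunctor of `Hom`. -/
structure Ideal (A : Type u) [Category.{v} A] [Preadditive A] : Type (max u v) where
  mem : ∀ ⦃X Y : A⦄, (X ⟶ Y) → Prop
  zero_mem : ∀ X Y : A, mem (0 : X ⟶ Y)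
  add_mem : ∀ ⦃X Y : A⦄ ⦃f g : X ⟶ Y⦄, mem f → mem g → mem (f + g)
  neg_mem : ∀ ⦃X Y : A⦄ ⦃f : X ⟶ Y⦄, mem f → mem (-f)
  comp_mem : ∀ ⦃W X Y Z : A⦄ (h : W ⟶ X) ⦃g : X ⟶ Y⦄ (k : Y ⟶ Z), mem g → mem (h ≫ g ≫ k)

/-- A class of morphisms of a category. -/
abbrev MorClass (A : Type u) [Category.{v} A] : Type (max u v) :=
  ∀ ⦃X Y : A⦄, (X ⟶ Y) → Prop

variable {A : Type u} [Category.{v} A] [Preadditive A]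

/-- `(i, p)` is a kernel-cokernel pair. -/
structure IsKernelCokernelPair {B C X : A} (i : B ⟶ C) (p : C ⟶ X) : Prop where
  w : i ≫ p = 0
  isKernel : Nonempty (IsLimit (KernelFork.ofι i w))
  isCokernel : Nonempty (IsColimit (CokernelCofork.ofπ p w))

/-- The maximal candidate exact structure: all kernel-cokernel pairs.  On an abelian
category (such as a module category) this is the standard exact (abelian) structure. -/
def maxExact (A : Type u) [Category.{v} A] [Preadditive A] : ExactStructureData A :=
  ⟨fun _ _ _ i p => IsKernelCokernelPair i p⟩

/-- `m` is an inflation: it occurs as the first map of a conflation. -/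
def ExactStructureData.IsInflation (E : ExactStructureData A) {B C : A} (m : B ⟶ C) : Prop :=
  ∃ (X : A) (p : C ⟶ X), E.conf m p

/-- `p` is a deflation: it occurs as the second map of a conflation. -/
def ExactStructureData.IsDeflation (E : ExactStructureData A) {C X : A} (p : C ⟶ X) : Prop :=
  ∃ (B : A) (i : B ⟶ C), E.conf i p

/-- The axioms of a Quillen exact category `(A; E)`. -/
structure ExactStructureData.IsExact (E : ExactStructureData A) : Prop where
  ker_coker : ∀ ⦃B C X : A⦄ ⦃i : B ⟶ C⦄ ⦃p : C ⟶ X⦄, E.conf i p → IsKernelCokernelPair i p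
  iso_closed : ∀ ⦃B C X B' C' X' : A⦄ ⦃i : B ⟶ C⦄ ⦃p : C ⟶ X⦄ ⦃i' : B' ⟶ C'⦄ ⦃p' : C' ⟶ X'⦄
      (eB : B ≅ B') (eC : C ≅ C') (eX : X ≅ X'),
      i ≫ eC.hom = eB.hom ≫ i' → p ≫ eX.hom = eC.hom ≫ p' → E.conf i p → E.conf i' p'
  id_inflation : ∀ X : A, E.IsInflation (𝟙 X)
  id_deflation : ∀ X : A, E.IsDeflation (𝟙 X)
  comp_inflation : ∀ ⦃X Y Z : A⦄ ⦃f : X ⟶ Y⦄ ⦃g : Y ⟶ Z⦄,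
      E.IsInflation f → E.IsInflation g → E.IsInflation (f ≫ g)
  comp_deflation : ∀ ⦃X Y Z : A⦄ ⦃f : X ⟶ Y⦄ ⦃g : Y ⟶ Z⦄,
      E.IsDeflation f → E.IsDeflation g → E.IsDeflation (f ≫ g)
  pushout_inflation : ∀ ⦃X Y Z : A⦄ (m : X ⟶ Y) (f : X ⟶ Z), E.IsInflation m →
      ∃ (W : A) (g : Y ⟶ W) (m' : Z ⟶ W), IsPushout m f g m' ∧ E.IsInflation m'
  pullback_deflation : ∀ ⦃X Y Z : A⦄ (p : Y ⟶ X) (f : Z ⟶ X), E.IsDeflation p →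
      ∃ (W : A) (g : W ⟶ Y) (p' : W ⟶ Z), IsPullback g p' p f ∧ E.IsDeflation p'

/-- `Ext(a,b) = 0`: the composite `Ext(A1,B0) ⟶ Ext(A0,B1)` (pullback along `a`
followed by pushout along `b`) vanishes.  Elementwise: for every conflation
`B0 ⟶ C ⟶ A1` and every pushout of it along `b` (a conflation `B1 ⟶ C' ⟶ A1`),
the morphism `a` lifts along the deflation `C' ⟶ A1`, i.e. the pullback along `a`
of the pushout along `b` splits. -/
def ExtZero (E : ExactStructureData A) {A0 A1 B0 B1 : A} (a : A0 ⟶ A1) (b : B0 ⟶ B1) : Prop :=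
  ∀ ⦃C : A⦄ (i : B0 ⟶ C) (p : C ⟶ A1), E.conf i p →
    ∀ ⦃C' : A⦄ (c : C ⟶ C') (i' : B1 ⟶ C') (p' : C' ⟶ A1),
      IsPushout i b c i' → c ≫ p' = p → i' ≫ p' = 0 →
      ∃ s : A0 ⟶ C', s ≫ p' = a

/-- The class of morphisms left `Ext`-orthogonal to every member of `M`. -/
def leftPerp (E : ExactStructureData A) (M : MorClass A) : MorClass A :=
  fun _ _ a => ∀ ⦃B0 B1 : A⦄ (b : B0 ⟶ B1), M b → ExtZero E a b

/-- The class of morphisms right `Ext`-orthogonal to every member of `M`. -/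
def rightPerp (E : ExactStructureData A) (M : MorClass A) : MorClass A :=
  fun _ _ b => ∀ ⦃A0 A1 : A⦄ (a : A0 ⟶ A1), M a → ExtZero E a b

/-- Intersection of two classes of morphisms. -/
def interClass (M N : MorClass A) : MorClass A := fun _ _ f => M f ∧ N f

/-- Intersection of a set-indexed family of classes of morphisms. -/
def interFamily {ι : Type w} (J : ι → MorClass A) : MorClass A := fun _ _ f => ∀ i, J i f

/-- `j : B ⟶ C0` is a special `J`-preenvelope of `B`: it belongs to `J` and appears as the
inflation of a conflation admitting a morphism of conflations (identity on `B`) whose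
right-hand component lies in `⊥J`. -/
def IsSpecialPreenvelope (E : ExactStructureData A) (J : MorClass A) {B C0 : A}
    (j : B ⟶ C0) : Prop :=
  J j ∧ ∃ (A0 A1 C1 : A) (p0 : C0 ⟶ A0) (j' : B ⟶ C1) (p1 : C1 ⟶ A1)
      (c : C0 ⟶ C1) (a : A0 ⟶ A1),
    E.conf j p0 ∧ E.conf j' p1 ∧ j ≫ c = j' ∧ p0 ≫ a = c ≫ p1 ∧ leftPerp E J a

/-- `J` is a special preenveloping ideal (class). -/
def SpecialPreenveloping (E : ExactStructureData A) (J : MorClass A) : Prop :=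
  ∀ B : A, ∃ (C0 : A) (j : B ⟶ C0), IsSpecialPreenvelope E J j

/-- `e : D1 ⟶ B` is a special `I`-precover of `B`. -/
def IsSpecialPrecover (E : ExactStructureData A) (I : MorClass A) {D1 B : A}
    (e : D1 ⟶ B) : Prop :=
  I e ∧ ∃ (K0 K1 D0 : A) (i0 : K0 ⟶ D0) (p0 : D0 ⟶ B) (i1 : K1 ⟶ D1)
      (k : K0 ⟶ K1) (d : D0 ⟶ D1),
    E.conf i0 p0 ∧ E.conf i1 e ∧ i0 ≫ d = k ≫ i1 ∧ d ≫ e = p0 ∧ rightPerp E I k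

/-- `I` is a special precovering ideal (class). -/
def SpecialPrecovering (E : ExactStructureData A) (I : MorClass A) : Prop :=
  ∀ B : A, ∃ (D1 : A) (e : D1 ⟶ B), IsSpecialPrecover E I e

/-- The ideal of projective morphisms: morphisms left `Ext`-orthogonal to all morphisms. -/
def projClass (E : ExactStructureData A) : MorClass A :=
  fun _ _ p => ∀ ⦃B0 B1 : A⦄ (b : B0 ⟶ B1), ExtZero E p b

/-- The ideal of injective morphisms: morphisms right `Ext`-orthogonal to all morphisms. -/
def injClass (E : ExactStructureData A) : MorClass A :=
  fun _ _ j => ∀ ⦃A0 A1 : A⦄ (a : A0 ⟶ A1), ExtZero E a j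

/-- Every object is the codomain of a projective morphism. -/
def HasEnoughProjectiveMorphisms (E : ExactStructureData A) : Prop :=
  ∀ X : A, ∃ (P : A) (p : P ⟶ X), projClass E p

/-- Every object is the domain of an injective morphism. -/
def HasEnoughInjectiveMorphisms (E : ExactStructureData A) : Prop :=
  ∀ X : A, ∃ (Y : A) (j : X ⟶ Y), injClass E j

/-- `(I, J)` is an ideal cotorsion pair: `I = ⊥J` and `J = I⊥`. -/
def IsIdealCotorsionPair (E : ExactStructureData A) (I J : MorClass A) : Prop :=
  (∀ ⦃X Y : A⦄ (f : X ⟶ Y), I f ↔ leftPerp E J f) ∧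
  (∀ ⦃X Y : A⦄ (f : X ⟶ Y), J f ↔ rightPerp E I f)

/-- A complete ideal cotorsion pair: `I` is special precovering and `J` is special
preenveloping. -/
def IsCompleteIdealCotorsionPair (E : ExactStructureData A) (I J : MorClass A) : Prop :=
  IsIdealCotorsionPair E I J ∧ SpecialPrecovering E I ∧ SpecialPreenveloping E J

/-- `c = b ⋆ a` is an ME (mono-epi) extension of the arrow `a` by the arrow `b`. -/
def IsMEExtension (E : ExactStructureData A) {B0 B1 A0 A1 C0 C1 : A}
    (b : B0 ⟶ B1) (a : A0 ⟶ A1) (c : C0 ⟶ C1) : Prop :=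
  ∃ (i0 : B0 ⟶ C0) (p0 : C0 ⟶ A0) (i1 : B1 ⟶ C1) (p1 : C1 ⟶ A1)
    (Cm : A) (im : B0 ⟶ Cm) (pm : Cm ⟶ A1) (c1 : C0 ⟶ Cm) (c2 : Cm ⟶ C1),
    E.conf i0 p0 ∧ E.conf i1 p1 ∧ E.conf im pm ∧ c = c1 ≫ c2 ∧
    i0 ≫ c1 = im ∧ c1 ≫ pm = p0 ≫ a ∧ im ≫ c2 = b ≫ i1 ∧ c2 ≫ p1 = pm

/-- `I ⋄ K` : the class of all ME-extensions `i ⋆ k` with `i ∈ I`, `k ∈ K`. -/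
def diamond (E : ExactStructureData A) (I K : MorClass A) : MorClass A :=
  fun _ _ c => ∃ (B0 B1 A0 A1 : A) (b : B0 ⟶ B1) (a : A0 ⟶ A1),
    I b ∧ K a ∧ IsMEExtension E b a c

/-- `j` is a `J`-preenvelope (left approximation). -/
def IsPreenvelope (J : MorClass A) {B C : A} (j : B ⟶ C) : Prop :=
  J j ∧ ∀ ⦃C' : A⦄ (j' : B ⟶ C'), J j' → ∃ f : C ⟶ C', j ≫ f = j'

/-- `J` is a preenveloping ideal (class). -/
def Preenveloping (J : MorClass A) : Prop :=
  ∀ B : A, ∃ (C : A) (j : B ⟶ C), IsPreenvelope J j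

/-- `e` is an `I`-precover (right approximation). -/
def IsPrecover (I : MorClass A) {D B : A} (e : D ⟶ B) : Prop :=
  I e ∧ ∀ ⦃D' : A⦄ (e' : D' ⟶ B), I e' → ∃ f : D' ⟶ D, f ≫ e = e'

/-- `I` is a precovering ideal (class). -/
def Precovering (I : MorClass A) : Prop :=
  ∀ B : A, ∃ (D : A) (e : D ⟶ B), IsPrecover I e

/-- `J` is monic preenveloping: every object admits a preenvelope which is an inflation. -/
def MonicPreenveloping (E : ExactStructureData A) (J : MorClass A) : Prop :=
  ∀ B : A, ∃ (C : A) (j : B ⟶ C), E.IsInflation j ∧ IsPreenvelope J j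

/-- `I` is epic precovering: every object admits a precover which is a deflation. -/
def EpicPrecovering (E : ExactStructureData A) (I : MorClass A) : Prop :=
  ∀ B : A, ∃ (D : A) (e : D ⟶ B), E.IsDeflation e ∧ IsPrecover I e

/-- A conflation of arrows `b ⟶ c ⟶ a` in `(Arr(A); Arr(E))`, encoded componentwise:
two conflations `(i0, p0)`, `(i1, p1)` together with the commutativity of the two squares. -/
def IsArrowConf (E : ExactStructureData A) {B0 B1 C0 C1 A0 A1 : A}
    (b : B0 ⟶ B1) (c : C0 ⟶ C1) (a : A0 ⟶ A1)
    (i0 : B0 ⟶ C0) (p0 : C0 ⟶ A0) (i1 : B1 ⟶ C1) (p1 : C1 ⟶ A1) : Prop :=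
  E.conf i0 p0 ∧ E.conf i1 p1 ∧ i0 ≫ c = b ≫ i1 ∧ p0 ≫ a = c ≫ p1

/-- An ME (mono-epi) conflation of arrows, encoded componentwise. -/
def IsMEArrowConf (E : ExactStructureData A) {B0 B1 C0 C1 A0 A1 : A}
    (b : B0 ⟶ B1) (c : C0 ⟶ C1) (a : A0 ⟶ A1)
    (i0 : B0 ⟶ C0) (p0 : C0 ⟶ A0) (i1 : B1 ⟶ C1) (p1 : C1 ⟶ A1) : Prop :=
  IsArrowConf E b c a i0 p0 i1 p1 ∧
  ∃ (Cm : A) (im : B0 ⟶ Cm) (pm : Cm ⟶ A1) (c1 : C0 ⟶ Cm) (c2 : Cm ⟶ C1),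
    E.conf im pm ∧ c = c1 ≫ c2 ∧ i0 ≫ c1 = im ∧ c1 ≫ pm = p0 ≫ a ∧
    im ≫ c2 = b ≫ i1 ∧ c2 ≫ p1 = pm

/-- Equivalence (isomorphism fixing the two end arrows) of conflations of arrows. -/
def ArrowConfEquiv {B0 B1 C0 C1 D0 D1 A0 A1 : A}
    (c : C0 ⟶ C1) (i0 : B0 ⟶ C0) (p0 : C0 ⟶ A0) (i1 : B1 ⟶ C1) (p1 : C1 ⟶ A1)
    (d : D0 ⟶ D1) (j0 : B0 ⟶ D0) (q0 : D0 ⟶ A0) (j1 : B1 ⟶ D1) (q1 : D1 ⟶ A1) : Prop :=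
  ∃ (e0 : C0 ≅ D0) (e1 : C1 ≅ D1),
    c ≫ e1.hom = e0.hom ≫ d ∧ i0 ≫ e0.hom = j0 ∧ e0.hom ≫ q0 = p0 ∧
    i1 ≫ e1.hom = j1 ∧ e1.hom ≫ q1 = p1

/-- `(A; E)` has exact coproducts: coproducts exist and a coproduct of conflations is a
conflation. -/
def HasExactCoproducts [HasCoproducts.{w} A] (E : ExactStructureData A) : Prop :=
  ∀ (ι : Type w) (B C X : ι → A) (i : ∀ j, B j ⟶ C j) (p : ∀ j, C j ⟶ X j),
    (∀ j, E.conf (i j) (p j)) → E.conf (Limits.Sigma.map i) (Limits.Sigma.map p)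

/-- `(A; E)` has exact products: products exist and a product of conflations is a
conflation. -/
def HasExactProducts [HasProducts.{w} A] (E : ExactStructureData A) : Prop :=
  ∀ (ι : Type w) (B C X : ι → A) (i : ∀ j, B j ⟶ C j) (p : ∀ j, C j ⟶ X j),
    (∀ j, E.conf (i j) (p j)) → E.conf (Limits.Pi.map i) (Limits.Pi.map p)

/-- The ideal generated by a set-indexed family of morphisms: finite sums of
composites through the generators. -/
def genIdeal {ι : Type w} {X0 X1 : ι → A} (m : ∀ i, X0 i ⟶ X1 i) : MorClass A :=
  fun X Y f => ∃ (n : ℕ) (j : Fin n → ι) (g : ∀ k : Fin n, X ⟶ X0 (j k))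
    (h : ∀ k : Fin n, X1 (j k) ⟶ Y),
    f = ∑ k : Fin n, g k ≫ m (j k) ≫ h k

/-- The sum of a set-indexed family of ideals: finite sums of members. -/
def idealFamilySum {ι : Type w} (I : ι → Ideal A) : MorClass A :=
  fun X Y f => ∃ (n : ℕ) (j : Fin n → ι) (g : Fin n → (X ⟶ Y)),
    (∀ k, (I (j k)).mem (g k)) ∧ f = ∑ k : Fin n, g k

/-- Containment of ideals. -/
def Ideal.le (I J : Ideal A) : Prop := ∀ ⦃X Y : A⦄ ⦃f : X ⟶ Y⦄, I.mem f → J.mem f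

/-- Intersection of two ideals. -/
def Ideal.inf (I J : Ideal A) : Ideal A where
  mem := fun _ _ f => I.mem f ∧ J.mem f
  zero_mem := fun X Y => ⟨I.zero_mem X Y, J.zero_mem X Y⟩
  add_mem := fun _ _ _ _ hf hg => ⟨I.add_mem hf.1 hg.1, J.add_mem hf.2 hg.2⟩
  neg_mem := fun _ _ _ hf => ⟨I.neg_mem hf.1, J.neg_mem hf.2⟩
  comp_mem := fun _ _ _ _ h _ k hg => ⟨I.comp_mem h k hg.1, J.comp_mem h k hg.2⟩

/-- Sum of two ideals. -/
def Ideal.sum (I J : Ideal A) : Ideal A where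
  mem := fun _ _ f => ∃ g h, I.mem g ∧ J.mem h ∧ f = g + h
  zero_mem := fun X Y => ⟨0, 0, I.zero_mem X Y, J.zero_mem X Y, by simp⟩
  add_mem := by
    rintro X Y f g ⟨f1, f2, hf1, hf2, rfl⟩ ⟨g1, g2, hg1, hg2, rfl⟩
    exact ⟨f1 + g1, f2 + g2, I.add_mem hf1 hg1, J.add_mem hf2 hg2, by abel⟩
  neg_mem := by
    rintro X Y f ⟨f1, f2, h1, h2, rfl⟩
    exact ⟨-f1, -f2, I.neg_mem h1, J.neg_mem h2, by abel⟩
  comp_mem := by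
    rintro W X Y Z h g k ⟨g1, g2, h1, h2, rfl⟩
    exact ⟨h ≫ g1 ≫ k, h ≫ g2 ≫ k, I.comp_mem h k h1, J.comp_mem h k h2, by
      simp [Preadditive.add_comp, Preadditive.comp_add]⟩

/-- An ideal closed under set-indexed coproducts of morphisms. -/
def ClosedUnderCoproducts [HasCoproducts.{w} A] (I : Ideal A) : Prop :=
  ∀ ⦃ι : Type w⦄ ⦃X0 X1 : ι → A⦄ (f : ∀ i, X0 i ⟶ X1 i),
    (∀ i, I.mem (f i)) → I.mem (Limits.Sigma.map f)

/-- An ideal closed under ME-extensions by projective morphisms. -/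
def ClosedUnderProjME (E : ExactStructureData A) (I : Ideal A) : Prop :=
  ∀ ⦃P0 P1 K0 K1 C0 C1 : A⦄ (p : P0 ⟶ P1) (k : K0 ⟶ K1) (c : C0 ⟶ C1),
    projClass E p → I.mem k → IsMEExtension E p k c → I.mem c

/-- `Ext_{Arr(A)}(a, b)` is a set: there is a set-indexed family of conflations of arrows
`b ⟶ c^ζ ⟶ a` representing every conflation of arrows from `b` to `a` up to equivalence. -/
def ExtArrowSmall (E : ExactStructureData A) {A0 A1 B0 B1 : A}
    (a : A0 ⟶ A1) (b : B0 ⟶ B1) : Prop :=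
  ∃ (ι : Type w) (C0 C1 : ι → A) (c : ∀ z, C0 z ⟶ C1 z)
    (i0 : ∀ z, B0 ⟶ C0 z) (p0 : ∀ z, C0 z ⟶ A0) (i1 : ∀ z, B1 ⟶ C1 z) (p1 : ∀ z, C1 z ⟶ A1),
    (∀ z, IsArrowConf E b (c z) a (i0 z) (p0 z) (i1 z) (p1 z)) ∧
    ∀ ⦃D0 D1 : A⦄ (d : D0 ⟶ D1) (j0 : B0 ⟶ D0) (q0 : D0 ⟶ A0) (j1 : B1 ⟶ D1) (q1 : D1 ⟶ A1),
      IsArrowConf E b d a j0 q0 j1 q1 →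
      ∃ z, ArrowConfEquiv (c z) (i0 z) (p0 z) (i1 z) (p1 z) d j0 q0 j1 q1

/-- `Ext(X, B)` is a set: there is a set-indexed family of conflations `B ⟶ C^z ⟶ X`
representing every conflation from `B` to `X` up to equivalence. -/
def ExtObjSmall (E : ExactStructureData A) (X B : A) : Prop :=
  ∃ (ι : Type w) (C : ι → A) (m : ∀ z, B ⟶ C z) (p : ∀ z, C z ⟶ X),
    (∀ z, E.conf (m z) (p z)) ∧
    ∀ ⦃D : A⦄ (m' : B ⟶ D) (p' : D ⟶ X), E.conf m' p' →
      ∃ z, ∃ e : C z ≅ D, m z ≫ e.hom = m' ∧ e.hom ≫ p' = p z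

/-- `Add X`: direct summands of coproducts of copies of `X`. -/
def AddClosure [HasCoproducts.{w} A] (X : A) : A → Prop := fun M =>
  ∃ (ι : Type w) (s : M ⟶ ∐ (fun _ : ι => X)) (r : (∐ fun _ : ι => X) ⟶ M), s ≫ r = 𝟙 M

/-- The object ideal of morphisms factoring through an object of `S`. -/
def objIdeal (S : A → Prop) : MorClass A := fun X Y f =>
  ∃ (M : A) (g : X ⟶ M) (h : M ⟶ Y), S M ∧ f = g ≫ h


variable [HasBinaryBiproducts A]

section Aux

/-- Inflations are closed under isomorphism (in the codomain). -/
lemma aux_infl_iso (E : ExactStructureData A) (hE : E.IsExact) {B C C' : A}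
    {m : B ⟶ C} {m' : B ⟶ C'} (e : C ≅ C') (hcomm : m ≫ e.hom = m')
    (hm : E.IsInflation m) : E.IsInflation m' := by
  obtain ⟨X, p, hc⟩ := hm
  exact ⟨X, e.inv ≫ p,
    hE.iso_closed (Iso.refl B) e (Iso.refl X) (by simpa using hcomm) (by simp) hc⟩

/-- Any pushout of an inflation is an inflation. -/
lemma aux_infl_pushout (E : ExactStructureData A) (hE : E.IsExact)
    {X Y Z W : A} {m : X ⟶ Y} {f : X ⟶ Z} {g : Y ⟶ W} {m' : Z ⟶ W}
    (h : IsPushout m f g m') (hm : E.IsInflation m) : E.IsInflation m' := by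
  obtain ⟨W0, g0, m0', h0, hm0⟩ := hE.pushout_inflation m f hm
  refine aux_infl_iso E hE
    (Iso.mk (h0.desc g m' h.w) (h.desc g0 m0' h0.w) ?_ ?_) (h0.inr_desc _ _ _) hm0
  · apply h0.hom_ext <;> simp
  · apply h.hom_ext <;> simp

/-- Conflations can be transported to any other cokernel of the same inflation. -/
lemma aux_conf_of_cokernel (E : ExactStructureData A) (hE : E.IsExact)
    {B C X X' : A} {m : B ⟶ C} {p : C ⟶ X} (h : E.conf m p)
    {p' : C ⟶ X'} (w' : m ≫ p' = 0)
    (hcol : IsColimit (CokernelCofork.ofπ p' w')) : E.conf m p' := by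
  obtain ⟨w, hker, hcoker⟩ := hE.ker_coker h
  obtain ⟨hp⟩ := hcoker
  obtain ⟨eh, heh⟩ := CokernelCofork.IsColimit.desc' hp p' w'
  obtain ⟨ei, hei⟩ := CokernelCofork.IsColimit.desc' hcol p w
  simp only [Cofork.π_ofπ] at heh hei
  refine hE.iso_closed (Iso.refl B) (Iso.refl C) (Iso.mk eh ei ?_ ?_) (by simp) (by simp [heh]) h
  · refine Cofork.IsColimit.hom_ext hp ?_
    simp only [Cofork.π_ofπ, Category.comp_id]
    rw [← Category.assoc, heh, hei]
  · refine Cofork.IsColimit.hom_ext hcol ?_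
    simp only [Cofork.π_ofπ, Category.comp_id]
    rw [← Category.assoc, hei, heh]
    exact (Category.comp_id _).symm

lemma aux_conf_of_inflation (E : ExactStructureData A) (hE : E.IsExact)
    {B C X' : A} {m : B ⟶ C} (hm : E.IsInflation m) {p' : C ⟶ X'} (w' : m ≫ p' = 0)
    (hcol : IsColimit (CokernelCofork.ofπ p' w')) : E.conf m p' := by
  obtain ⟨X, p, hc⟩ := hm
  exact aux_conf_of_cokernel E hE hc w' hcol

/-- `m ⊕ 𝟙 Z` is a pushout of `m` along `inl`. -/
lemma aux_pushout_inl {X Y : A} (Z : A) (m : X ⟶ Y) :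
    IsPushout m (biprod.inl : X ⟶ X ⊞ Z) biprod.inl (biprod.map m (𝟙 Z)) := by
  refine IsPushout.of_isColimit (PushoutCocone.IsColimit.mk (biprod.inl_map _ _).symm
    (fun s => biprod.desc s.inl (biprod.inr ≫ s.inr)) (fun s => by simp) ?_ ?_)
  · intro s
    apply biprod.hom_ext'
    · rw [biprod.inl_map_assoc, biprod.inl_desc, s.condition]
    · rw [biprod.inr_map_assoc, Category.id_comp, biprod.inr_desc]
  · intro s w hl hr
    apply biprod.hom_ext'
    · rw [hl, biprod.inl_desc]
    · rw [biprod.inr_desc, ← hr, biprod.inr_map_assoc, Category.id_comp]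

/-- `𝟙 Z ⊕ m` is a pushout of `m` along `inr`. -/
lemma aux_pushout_inr {X Y : A} (Z : A) (m : X ⟶ Y) :
    IsPushout m (biprod.inr : X ⟶ Z ⊞ X) biprod.inr (biprod.map (𝟙 Z) m) := by
  refine IsPushout.of_isColimit (PushoutCocone.IsColimit.mk (biprod.inr_map _ _).symm
    (fun s => biprod.desc (biprod.inl ≫ s.inr) s.inl) (fun s => by simp) ?_ ?_)
  · intro s
    apply biprod.hom_ext'
    · rw [biprod.inl_map_assoc, Category.id_comp, biprod.inl_desc]
    · rw [biprod.inr_map_assoc, biprod.inr_desc, s.condition]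
  · intro s w hl hr
    apply biprod.hom_ext'
    · rw [biprod.inl_desc, ← hr, biprod.inl_map_assoc, Category.id_comp]
    · rw [hl, biprod.inr_desc]

/-- The direct sum of two cokernel forks is a cokernel fork. -/
noncomputable def auxBiprodCokernel {B1 B2 C1 C2 X1 X2 : A}
    {m1 : B1 ⟶ C1} {p1 : C1 ⟶ X1} {m2 : B2 ⟶ C2} {p2 : C2 ⟶ X2}
    {w1 : m1 ≫ p1 = 0} {w2 : m2 ≫ p2 = 0}
    (h1 : IsColimit (CokernelCofork.ofπ p1 w1)) (h2 : IsColimit (CokernelCofork.ofπ p2 w2))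
    (w : biprod.map m1 m2 ≫ biprod.map p1 p2 = 0) :
    IsColimit (CokernelCofork.ofπ (biprod.map p1 p2) w) := by
  have hz1 : ∀ {Z' : A} (g' : C1 ⊞ C2 ⟶ Z'), biprod.map m1 m2 ≫ g' = 0 →
      m1 ≫ biprod.inl ≫ g' = 0 := fun g' hg' => by
    rw [← biprod.inl_map_assoc m1 m2 g', hg', comp_zero]
  have hz2 : ∀ {Z' : A} (g' : C1 ⊞ C2 ⟶ Z'), biprod.map m1 m2 ≫ g' = 0 →
      m2 ≫ biprod.inr ≫ g' = 0 := fun g' hg' => by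
    rw [← biprod.inr_map_assoc m1 m2 g', hg', comp_zero]
  refine CokernelCofork.IsColimit.ofπ _ _
    (fun {Z'} g' hg' => biprod.desc
      (CokernelCofork.IsColimit.desc' h1 (biprod.inl ≫ g') (hz1 g' hg')).1
      (CokernelCofork.IsColimit.desc' h2 (biprod.inr ≫ g') (hz2 g' hg')).1) ?_ ?_
  · intro Z' g' hg'
    have e1 := (CokernelCofork.IsColimit.desc' h1 (biprod.inl ≫ g') (hz1 g' hg')).2
    have e2 := (CokernelCofork.IsColimit.desc' h2 (biprod.inr ≫ g') (hz2 g' hg')).2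
    simp only [Cofork.π_ofπ] at e1 e2
    apply biprod.hom_ext'
    · rw [biprod.inl_map_assoc, biprod.inl_desc, e1]
    · rw [biprod.inr_map_assoc, biprod.inr_desc, e2]
  · intro Z' g' hg' n hn
    have e1 := (CokernelCofork.IsColimit.desc' h1 (biprod.inl ≫ g') (hz1 g' hg')).2
    have e2 := (CokernelCofork.IsColimit.desc' h2 (biprod.inr ≫ g') (hz2 g' hg')).2
    simp only [Cofork.π_ofπ] at e1 e2
    apply biprod.hom_ext'
    · refine Cofork.IsColimit.hom_ext h1 ?_
      simp only [Cofork.π_ofπ]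
      rw [biprod.inl_desc, e1, ← hn, ← biprod.inl_map_assoc p1 p2 n]
    · refine Cofork.IsColimit.hom_ext h2 ?_
      simp only [Cofork.π_ofπ]
      rw [biprod.inr_desc, e2, ← hn, ← biprod.inr_map_assoc p1 p2 n]

/-- The main pushout square. -/
lemma aux_pushout_main {B C1 C2 P : A}
    (m1 : B ⟶ C1) (m2 : B ⟶ C2) (q1 : C1 ⟶ P) (q2 : C2 ⟶ P)
    (hpo : IsPushout m1 m2 q1 q2) :
    IsPushout (biprod.map m1 m2) (biprod.desc (𝟙 B) (𝟙 B))
      (biprod.desc q1 q2) (m1 ≫ q1) := by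
  have hcond : ∀ {T : A} (u : C1 ⊞ C2 ⟶ T) (v : B ⟶ T),
      biprod.map m1 m2 ≫ u = biprod.desc (𝟙 B) (𝟙 B) ≫ v →
      m1 ≫ biprod.inl ≫ u = m2 ≫ biprod.inr ≫ u := by
    intro T u v hc
    have e1 : m1 ≫ biprod.inl ≫ u = v := by
      rw [← biprod.inl_map_assoc m1 m2 u, hc, biprod.inl_desc_assoc, Category.id_comp]
    have e2 : m2 ≫ biprod.inr ≫ u = v := by
      rw [← biprod.inr_map_assoc m1 m2 u, hc, biprod.inr_desc_assoc, Category.id_comp]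
    rw [e1, e2]
  refine IsPushout.of_isColimit (PushoutCocone.IsColimit.mk (inl := biprod.desc q1 q2)
    (inr := m1 ≫ q1) (by apply biprod.hom_ext' <;> simp [hpo.w]) (fun s =>
      hpo.desc (biprod.inl ≫ s.inl) (biprod.inr ≫ s.inl) (hcond s.inl s.inr s.condition))
    ?_ ?_ ?_)
  · intro s
    apply biprod.hom_ext'
    · rw [biprod.inl_desc_assoc, hpo.inl_desc]
    · rw [biprod.inr_desc_assoc, hpo.inr_desc]
  · intro s
    have e1 : m1 ≫ biprod.inl ≫ s.inl = s.inr := by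
      rw [← biprod.inl_map_assoc m1 m2 s.inl, s.condition, biprod.inl_desc_assoc,
        Category.id_comp]
    rw [Category.assoc, hpo.inl_desc, e1]
  · intro s w hl hr
    apply hpo.hom_ext
    · rw [hpo.inl_desc, ← hl, biprod.inl_desc_assoc]
    · rw [hpo.inr_desc, ← hl, biprod.inr_desc_assoc]

end Aux

/-- Lemma: cokernel of a pushout of inflations.  Given conflations
`B ⟶ C1 ⟶ A1` and `B ⟶ C2 ⟶ A2` and a pushout square of the inflations `m1`, `m2`,
the pushout `m1 ⨿_B m2 = m1 ≫ q1 : B ⟶ C1 ⨿_B C2` is the inflation occurring in the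
pushout of the direct-sum conflation `B ⊕ B ⟶ C1 ⊕ C2 ⟶ A1 ⊕ A2` along the sum
morphism `s = (1_B, 1_B)`: there is a morphism of conflations with left component `s`,
middle component `(q1, q2)`, right component the identity of `A1 ⊕ A2`, whose left-hand
square is a pushout square. -/
theorem statement5 (E : ExactStructureData A) (hE : E.IsExact)
    {B C1 C2 A1 A2 P : A} (m1 : B ⟶ C1) (p1 : C1 ⟶ A1) (m2 : B ⟶ C2) (p2 : C2 ⟶ A2)
    (h1 : E.conf m1 p1) (h2 : E.conf m2 p2)
    (q1 : C1 ⟶ P) (q2 : C2 ⟶ P) (hpo : IsPushout m1 m2 q1 q2) :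
    E.conf (biprod.map m1 m2) (biprod.map p1 p2) ∧
    ∃ r : P ⟶ A1 ⊞ A2,
      E.conf (m1 ≫ q1) r ∧
      biprod.map m1 m2 ≫ biprod.desc q1 q2 = biprod.desc (𝟙 B) (𝟙 B) ≫ (m1 ≫ q1) ∧
      biprod.map p1 p2 = biprod.desc q1 q2 ≫ r ∧
      IsPushout (biprod.map m1 m2) (biprod.desc (𝟙 B) (𝟙 B))
        (biprod.desc q1 q2) (m1 ≫ q1) := by
  have w1 := (hE.ker_coker h1).w
  have w2 := (hE.ker_coker h2).w
  -- the direct sum of the two conflations is a conflation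
  have w0 : biprod.map m1 m2 ≫ biprod.map p1 p2 = 0 := by
    apply biprod.hom_ext'
    · rw [biprod.inl_map_assoc, biprod.inl_map, ← Category.assoc, w1, zero_comp, comp_zero]
    · rw [biprod.inr_map_assoc, biprod.inr_map, ← Category.assoc, w2, zero_comp, comp_zero]
  have i1 : E.IsInflation (biprod.map m1 (𝟙 B)) :=
    aux_infl_pushout E hE (aux_pushout_inl B m1) ⟨_, _, h1⟩
  have i2 : E.IsInflation (biprod.map (𝟙 C1) m2) :=
    aux_infl_pushout E hE (aux_pushout_inr C1 m2) ⟨_, _, h2⟩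
  have icomp := hE.comp_inflation i1 i2
  have hmm : biprod.map m1 (𝟙 B) ≫ biprod.map (𝟙 C1) m2 = biprod.map m1 m2 := by
    apply biprod.hom_ext' <;> simp
  rw [hmm] at icomp
  have colSum : IsColimit (CokernelCofork.ofπ (biprod.map p1 p2) w0) :=
    auxBiprodCokernel (hE.ker_coker h1).isCokernel.some (hE.ker_coker h2).isCokernel.some w0
  have confSum : E.conf (biprod.map m1 m2) (biprod.map p1 p2) :=
    aux_conf_of_inflation E hE icomp w0 colSum
  refine ⟨confSum, ?_⟩
  -- the pushout square
  have hPO := aux_pushout_main m1 m2 q1 q2 hpo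
  have inflP : E.IsInflation (m1 ≫ q1) := aux_infl_pushout E hE hPO ⟨_, _, confSum⟩
  have wr : biprod.map m1 m2 ≫ biprod.map p1 p2 =
      biprod.desc (𝟙 B) (𝟙 B) ≫ (0 : B ⟶ A1 ⊞ A2) := by rw [w0, comp_zero]
  have key : ∀ (r : P ⟶ A1 ⊞ A2), biprod.desc q1 q2 ≫ r = biprod.map p1 p2 →
      ∀ (hr_inr : (m1 ≫ q1) ≫ r = 0), E.conf (m1 ≫ q1) r := by
    intro r hr_inl hr_inr
    -- r is a cokernel of m1 ≫ q1
    have hz : ∀ {Z' : A} (g' : P ⟶ Z'), (m1 ≫ q1) ≫ g' = 0 →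
        biprod.map m1 m2 ≫ biprod.desc q1 q2 ≫ g' = 0 := by
      intro Z' g' hg'
      rw [← Category.assoc, hPO.w, Category.assoc, hg', comp_zero]
    have colr : IsColimit (CokernelCofork.ofπ r hr_inr) := by
      refine CokernelCofork.IsColimit.ofπ _ _
        (fun {Z'} g' hg' =>
          (CokernelCofork.IsColimit.desc' colSum (biprod.desc q1 q2 ≫ g') (hz g' hg')).1) ?_ ?_
      · intro Z' g' hg'
        have e := (CokernelCofork.IsColimit.desc' colSum (biprod.desc q1 q2 ≫ g')
          (hz g' hg')).2
        simp only [Cofork.π_ofπ] at e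
        apply hPO.hom_ext
        · rw [← Category.assoc, hr_inl, e]
        · rw [← Category.assoc, hr_inr, zero_comp, hg']
      · intro Z' g' hg' n hn
        have e := (CokernelCofork.IsColimit.desc' colSum (biprod.desc q1 q2 ≫ g')
          (hz g' hg')).2
        simp only [Cofork.π_ofπ] at e
        refine Cofork.IsColimit.hom_ext colSum ?_
        simp only [Cofork.π_ofπ]
        rw [e, ← hn, ← Category.assoc, hr_inl]
    exact aux_conf_of_inflation E hE inflP hr_inr colr
  exact ⟨hPO.desc (biprod.map p1 p2) 0 wr,
    key _ (hPO.inl_desc _ _ _) (hPO.inr_desc _ _ _), hPO.w, (hPO.inl_desc _ _ _).symm, hPO⟩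

end IdealApprox
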